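/- Let μ = 2λ/(m+1), and let P̂(x) = (1 − μx)^{m−1} and Q̂(x) = ((m+1)/m)·(1 − μx)^m − (1/m)·(1 − μx)^{m+1} + c·x^{m+1}. Suppose J ⊆ ℝ is an interval and Z : J → ℝ is a differentiable function satisfying r·Z'(r)·P̂(Z(r)) + Q̂(Z(r)) = 0 for all r ∈ J, with 1 − μ·Z(r) ≠ 0 on J. Then the function ξ(r) := Z(r)/(1 − μ·Z(r)) satisfies r·ξ'(r) = −c·ξ(r)^{m+1} + a·ξ(r) − 1 for all r ∈ J. -/

import Mathlib

open Set

/-- the change of variables ξ = Z/(1 − μZ) transforms the ODE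
r·Z'·P̂(Z) + Q̂(Z) = 0, with P̂(x) = (1−μx)^{m−1} and
Q̂(x) = ((m+1)/m)(1−μx)^m − (1/m)(1−μx)^{m+1} + c·x^{m+1},
into r·ξ' = −c·ξ^{m+1} + a·ξ − 1. -/
theorem stmt_15 (m : ℕ) (hm : 2 ≤ m) (lam : ℝ) (hlam : lam < 0)
    (a c μ : ℝ)
    (hA : a = -2 * lam / m)
    (hc : c = -((2 / ((m : ℝ) + 1)) ^ (m + 1) * (1 - lam) ^ m * (1 + lam / m)))
    (hμ : μ = 2 * lam / ((m : ℝ) + 1))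
    (J : Set ℝ) (hJ : J.OrdConnected)
    (Z : ℝ → ℝ)
    (hdiff : ∀ r ∈ J, DifferentiableAt ℝ Z r)
    (hODE : ∀ r ∈ J,
      r * deriv Z r * (1 - μ * Z r) ^ (m - 1) +
        (((m : ℝ) + 1) / m * (1 - μ * Z r) ^ m -
          1 / m * (1 - μ * Z r) ^ (m + 1) + c * Z r ^ (m + 1)) = 0)
    (hne : ∀ r ∈ J, 1 - μ * Z r ≠ 0) :
    ∀ r ∈ J,
      r * deriv (fun s => Z s / (1 - μ * Z s)) r =
        -c * (Z r / (1 - μ * Z r)) ^ (m + 1) + a * (Z r / (1 - μ * Z r)) - 1 := by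
  obtain ⟨k, rfl⟩ : ∃ k, m = k + 2 := ⟨m - 2, by omega⟩
  intro r hr
  have hD : 1 - μ * Z r ≠ 0 := hne r hr
  have hZ : HasDerivAt Z (deriv Z r) r := (hdiff r hr).hasDerivAt
  have hden : HasDerivAt (fun s => 1 - μ * Z s) (-(μ * deriv Z r)) r := by
    simpa using ((hZ.const_mul μ).const_sub 1)
  have hdiv : HasDerivAt (fun s => Z s / (1 - μ * Z s))
      ((deriv Z r * (1 - μ * Z r) - Z r * (-(μ * deriv Z r))) / (1 - μ * Z r) ^ 2) r :=
    hZ.div hden hD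
  rw [hdiv.deriv]
  have h1 := hODE r hr
  simp only [show k + 2 - 1 = k + 1 by omega] at h1
  have hm0 : ((k : ℝ) + 2) ≠ 0 := by positivity
  have hm1 : ((k : ℝ) + 2 + 1) ≠ 0 := by positivity
  set z := Z r with hzdef
  set z' := deriv Z r with hz'def
  set D := 1 - μ * z with hDdef
  -- numerator identity
  have hnum : -((((k : ℝ) + 2) + 1) / ((k : ℝ) + 2) * D ^ (k + 2) -
        1 / ((k : ℝ) + 2) * D ^ (k + 3) + c * z ^ (k + 3)) =
      -c * z ^ (k + 3) + a * z * D ^ (k + 2) - D ^ (k + 3) := by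
    have h3 : D ^ (k + 3) = D ^ (k + 2) * D := by ring
    rw [h3, hDdef, hA, hμ]
    push_cast
    field_simp
    ring
  -- key consequence of the ODE
  have key : r * z' * D ^ (k + 1) =
      -c * z ^ (k + 3) + a * z * D ^ (k + 2) - D ^ (k + 3) := by
    rw [← hnum]
    push_cast at h1 ⊢
    linarith [h1]
  have hone : z' * D - z * (-(μ * z')) = z' * (D + μ * z) := by ring
  have hDz : D + μ * z = 1 := by rw [hDdef]; ring
  rw [hone, hDz, mul_one]
  -- make D opaque and finish algebraically
  clear hnum h1 hODE hne hdiv hden hDdef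
  clear_value D
  rw [div_pow]
  field_simp
  linear_combination D ^ 2 * key
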